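/- arXiv:2301.13139 — 5 statements merged into one kernel-verified Lean document; each statement's English description precedes it below -/
import Mathlib

section
/- Let A be a finite set, let Y ⊆ ℝ^A be a convex set containing the probability simplex Δ(A), and let h : Y → ℝ be strictly convex and differentiable on the relevant points, with Bregman divergence D_h. Let η > 0 and f ∈ ℝ^A, and let q ∈ Y be a point at which h is differentiable satisfying ∇h(q) = η·f (i.e., q = ∇h*(η f)). Let π̃ ∈ Δ(A) be a minimizer over Δ(A) of the map p ↦ D_h(p, q). Then for every π ∈ Δ(A) and every π̄ in the relative interior of Δ(A) at which h is differentiable, one has ⟨η·f − ∇h(π̄), π − π̃⟩ ≤ D_h(π, π̄) − D_h(π̃, π̄) − D_h(π, π̃). -/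
/-- The probability simplex over a finite set `A`, as a subset of `EuclideanSpace ℝ A`. -/
def probSimplex (A : Type*) [Fintype A] : Set (EuclideanSpace ℝ A) :=
  {p | (∀ a, 0 ≤ p a) ∧ ∑ a, p a = 1}

/-- The Bregman divergence generated by `h`, where `gh` is the gradient of `h`:
`D_h(x, y) = h x - h y - ⟨gh y, x - y⟩`. -/
noncomputable def bregman {E : Type*} [NormedAddCommGroup E] [InnerProductSpace ℝ E]
    (h : E → ℝ) (gh : E → E) (x y : E) : ℝ :=
  h x - h y - (inner ℝ (gh y) (x - y) : ℝ)

/-- the key three-point lemma for the Bregman projection onto the simplex. -/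
theorem ampo_key_lemma {A : Type*} [Fintype A] [Nonempty A]
    (Y : Set (EuclideanSpace ℝ A)) (hYconv : Convex ℝ Y) (hYsub : probSimplex A ⊆ Y)
    (h : EuclideanSpace ℝ A → ℝ) (gh : EuclideanSpace ℝ A → EuclideanSpace ℝ A)
    (hconv : StrictConvexOn ℝ Y h)
    (η : ℝ) (hη : 0 < η) (f : EuclideanSpace ℝ A)
    (q : EuclideanSpace ℝ A) (hqY : q ∈ Y)
    (hq_grad : HasGradientWithinAt h (gh q) Y q)
    (hq_dual : gh q = η • f)
    (πt : EuclideanSpace ℝ A) (hπt : πt ∈ probSimplex A)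
    (hπt_grad : HasGradientWithinAt h (gh πt) Y πt)
    (hπt_min : ∀ p ∈ probSimplex A, bregman h gh πt q ≤ bregman h gh p q)
    (π : EuclideanSpace ℝ A) (hπ : π ∈ probSimplex A)
    (πb : EuclideanSpace ℝ A) (hπb : πb ∈ intrinsicInterior ℝ (probSimplex A))
    (hπb_grad : HasGradientWithinAt h (gh πb) Y πb) :
    (inner ℝ (η • f - gh πb) (π - πt) : ℝ) ≤
      bregman h gh π πb - bregman h gh πt πb - bregman h gh π πt := by

  -- The simplex is convex
  have hconvS : Convex ℝ (probSimplex A) := by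
    intro x hx y hy a b ha hb hab
    refine ⟨fun i => ?_, ?_⟩
    · have : (a • x + b • y) i = a * x i + b * y i := by
        simp [PiLp.add_apply, PiLp.smul_apply, smul_eq_mul]
      rw [this]
      have := hx.1 i; have := hy.1 i
      positivity
    · have : ∀ i, (a • x + b • y) i = a * x i + b * y i := fun i => by
        simp [PiLp.add_apply, PiLp.smul_apply, smul_eq_mul]
      simp only [this, Finset.sum_add_distrib, ← Finset.mul_sum, hx.2, hy.2]
      ring_nf
      linarith
  -- tangent cone membership
  have hseg : segment ℝ πt π ⊆ probSimplex A := hconvS.segment_subset hπt hπ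
  have hcone : π - πt ∈ posTangentConeAt (probSimplex A) πt :=
    sub_mem_posTangentConeAt_of_segment_subset hseg
  -- derivative of F p = h p - ⟪gh q, p⟫ within the simplex at πt
  have hF : HasFDerivWithinAt (fun p => h p - (innerSL ℝ (gh q)) p)
      ((InnerProductSpace.toDual ℝ (EuclideanSpace ℝ A) (gh πt) : EuclideanSpace ℝ A →L[ℝ] ℝ)
        - innerSL ℝ (gh q)) (probSimplex A) πt := by
    have h1 : HasFDerivWithinAt h
        (InnerProductSpace.toDual ℝ (EuclideanSpace ℝ A) (gh πt) : EuclideanSpace ℝ A →L[ℝ] ℝ)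
        Y πt := hπt_grad
    exact (h1.sub ((innerSL ℝ (gh q)).hasFDerivAt.hasFDerivWithinAt)).mono hYsub
  -- minimality
  have hmin : IsMinOn (fun p => h p - (innerSL ℝ (gh q)) p) (probSimplex A) πt := by
    intro p hp
    have := hπt_min p hp
    simp only [bregman, inner_sub_right] at this
    simp only [Set.mem_setOf_eq, innerSL_apply_apply]
    linarith
  have key : (0:ℝ) ≤ (inner ℝ (gh πt) (π - πt) : ℝ) - (inner ℝ (gh q) (π - πt) : ℝ) := by
    have := hmin.localize.hasFDerivWithinAt_nonneg hF hcone
    simpa using this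
  rw [← hq_dual]
  simp only [bregman, inner_sub_left, inner_sub_right] at key ⊢
  linarith
end

section
/- Let A be a finite set, let Y ⊆ ℝ^A be a convex set containing the probability simplex Δ(A), and let h : Y → ℝ be strictly convex and differentiable on the relevant points, with Bregman divergence D_h. Let η > 0 and f ∈ ℝ^A, let q ∈ Y be a point at which h is differentiable satisfying ∇h(q) = η·f, and let π̃ ∈ Δ(A) be a minimizer over Δ(A) of the map p ↦ D_h(p, q). Then for every π̄ in the relative interior of Δ(A) at which h is differentiable, one has ⟨η·f − ∇h(π̄), π̃ − π̄⟩ ≥ D_h(π̃, π̄) + D_h(π̄, π̃) ≥ 0. -/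
open Set Filter

private lemma line_hasDerivWithinAt {E : Type*} [NormedAddCommGroup E] [InnerProductSpace ℝ E]
    [CompleteSpace E] {h : E → ℝ} {g : E} {Y : Set E} {y d : E}
    (hy : HasGradientWithinAt h g Y y)
    (hmap : Set.MapsTo (fun t : ℝ => y + t • d) (Set.Icc 0 1) Y) :
    HasDerivWithinAt (fun t : ℝ => h (y + t • d)) (inner ℝ g d : ℝ) (Set.Icc 0 1) 0 := by
  have hL : HasDerivWithinAt (fun t : ℝ => y + t • d) d (Set.Icc 0 1) 0 := by
    simpa using ((((hasDerivAt_id (0:ℝ)).smul_const d).const_add y).hasDerivWithinAt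
      (s := Set.Icc 0 1))
  have := hy.hasFDerivWithinAt.comp_hasDerivWithinAt_of_eq (0:ℝ) hL hmap (by simp)
  exact this

private lemma deriv_le_of_slope {φ : ℝ → ℝ} {c C : ℝ}
    (hd : HasDerivWithinAt φ c (Set.Icc 0 1) 0)
    (hs : ∀ t ∈ Set.Ioc (0:ℝ) 1, (φ t - φ 0) / t ≤ C) : c ≤ C := by
  rw [hasDerivWithinAt_iff_tendsto_slope, Set.Icc_diff_left,
    nhdsWithin_Ioc_eq_nhdsGT zero_lt_one] at hd
  refine le_of_tendsto hd ?_
  filter_upwards [Ioc_mem_nhdsGT zero_lt_one] with t ht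
  simpa [slope_def_field] using hs t ht

private lemma deriv_nonneg_of_slope {φ : ℝ → ℝ} {c : ℝ}
    (hd : HasDerivWithinAt φ c (Set.Icc 0 1) 0)
    (hs : ∀ t ∈ Set.Ioc (0:ℝ) 1, 0 ≤ (φ t - φ 0) / t) : 0 ≤ c := by
  rw [hasDerivWithinAt_iff_tendsto_slope, Set.Icc_diff_left,
    nhdsWithin_Ioc_eq_nhdsGT zero_lt_one] at hd
  refine ge_of_tendsto hd ?_
  filter_upwards [Ioc_mem_nhdsGT zero_lt_one] with t ht
  simpa [slope_def_field] using hs t ht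

private lemma convexOn_grad_le {E : Type*} [NormedAddCommGroup E] [InnerProductSpace ℝ E]
    [CompleteSpace E] {h : E → ℝ} {Y : Set E} (hconv : ConvexOn ℝ Y h)
    {x y g : E} (hx : x ∈ Y) (hy : y ∈ Y) (hg : HasGradientWithinAt h g Y y) :
    (inner ℝ g (x - y) : ℝ) ≤ h x - h y := by
  have hmap : Set.MapsTo (fun t : ℝ => y + t • (x - y)) (Set.Icc 0 1) Y := by
    intro t ht
    have key : y + t • (x - y) = (1 - t) • y + t • x := by module
    show y + t • (x - y) ∈ Y
    rw [key]
    exact hconv.1 hy hx (by linarith [ht.2]) ht.1 (by ring)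
  refine deriv_le_of_slope (line_hasDerivWithinAt hg hmap) ?_
  intro t ht
  have hb : h (y + t • (x - y)) ≤ (1 - t) * h y + t * h x := by
    have key : y + t • (x - y) = (1 - t) • y + t • x := by module
    rw [key]
    exact hconv.2 hy hx (by linarith [ht.2]) (le_of_lt ht.1) (by ring)
  rw [div_le_iff₀ ht.1]
  simp only [zero_smul, add_zero]
  nlinarith [ht.1]

private lemma probSimplex_convex (A : Type*) [Fintype A] : Convex ℝ (probSimplex A) := by
  intro p hp q hq a b ha hb hab
  constructor
  · intro x
    have h1 := hp.1 x
    have h2 := hq.1 x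
    have : (a • p + b • q) x = a * p x + b * q x := rfl
    rw [this]
    positivity
  · have : ∀ x, (a • p + b • q) x = a * p x + b * q x := fun _ => rfl
    simp only [this, Finset.sum_add_distrib, ← Finset.mul_sum, hp.2, hq.2]
    linarith

/-- the improvement inequality for the Bregman projection onto the simplex. -/
theorem ampo_improvement_inequality {A : Type*} [Fintype A] [Nonempty A]
    (Y : Set (EuclideanSpace ℝ A)) (hYconv : Convex ℝ Y) (hYsub : probSimplex A ⊆ Y)
    (h : EuclideanSpace ℝ A → ℝ) (gh : EuclideanSpace ℝ A → EuclideanSpace ℝ A)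
    (hconv : StrictConvexOn ℝ Y h)
    (η : ℝ) (hη : 0 < η) (f : EuclideanSpace ℝ A)
    (q : EuclideanSpace ℝ A) (hqY : q ∈ Y)
    (hq_grad : HasGradientWithinAt h (gh q) Y q)
    (hq_dual : gh q = η • f)
    (πt : EuclideanSpace ℝ A) (hπt : πt ∈ probSimplex A)
    (hπt_grad : HasGradientWithinAt h (gh πt) Y πt)
    (hπt_min : ∀ p ∈ probSimplex A, bregman h gh πt q ≤ bregman h gh p q)
    (πb : EuclideanSpace ℝ A) (hπb : πb ∈ intrinsicInterior ℝ (probSimplex A))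
    (hπb_grad : HasGradientWithinAt h (gh πb) Y πb) :
    bregman h gh πt πb + bregman h gh πb πt ≤ (inner ℝ (η • f - gh πb) (πt - πb) : ℝ) ∧
      0 ≤ bregman h gh πt πb + bregman h gh πb πt := by
  have hπb_mem : πb ∈ probSimplex A := intrinsicInterior_subset hπb
  have hπtY : πt ∈ Y := hYsub hπt
  have hπbY : πb ∈ Y := hYsub hπb_mem
  have hcv : ConvexOn ℝ Y h := hconv.convexOn
  -- nonnegativity of the two Bregman divergences
  have h1 : (0:ℝ) ≤ bregman h gh πt πb := by
    have := convexOn_grad_le hcv hπtY hπbY hπb_grad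
    simp only [bregman]; linarith
  have h2 : (0:ℝ) ≤ bregman h gh πb πt := by
    have := convexOn_grad_le hcv hπbY hπtY hπt_grad
    simp only [bregman]; linarith
  -- first-order optimality of πt
  set d : EuclideanSpace ℝ A := πb - πt with hd
  have hmapS : Set.MapsTo (fun t : ℝ => πt + t • d) (Set.Icc 0 1) (probSimplex A) := by
    intro t ht
    show πt + t • d ∈ probSimplex A
    have key : πt + t • d = (1 - t) • πt + t • πb := by rw [hd]; module
    rw [key]
    exact probSimplex_convex A hπt hπb_mem (by linarith [ht.2]) ht.1 (by ring)
  have hmapY : Set.MapsTo (fun t : ℝ => πt + t • d) (Set.Icc 0 1) Y :=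
    fun t ht => hYsub (hmapS ht)
  have hφ : HasDerivWithinAt (fun t : ℝ => h (πt + t • d)) (inner ℝ (gh πt) d : ℝ)
      (Set.Icc 0 1) 0 := line_hasDerivWithinAt hπt_grad hmapY
  have hψ : HasDerivWithinAt (fun t : ℝ => (inner ℝ (gh q) (πt + t • d - q) : ℝ))
      (inner ℝ (gh q) d : ℝ) (Set.Icc 0 1) 0 := by
    have heq : (fun t : ℝ => (inner ℝ (gh q) (πt + t • d - q) : ℝ))
        = fun t : ℝ => (inner ℝ (gh q) (πt - q) : ℝ) + t * (inner ℝ (gh q) d : ℝ) := by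
      funext t
      have : πt + t • d - q = (πt - q) + t • d := by abel
      rw [this, inner_add_right, real_inner_smul_right]
    rw [heq]
    simpa using (((hasDerivAt_id (0:ℝ)).mul_const _).const_add
      ((inner ℝ (gh q) (πt - q) : ℝ))).hasDerivWithinAt (s := Set.Icc 0 1)
  have hF : HasDerivWithinAt (fun t : ℝ => bregman h gh (πt + t • d) q)
      ((inner ℝ (gh πt) d : ℝ) - (inner ℝ (gh q) d : ℝ)) (Set.Icc 0 1) 0 := by
    exact (hφ.sub_const (h q)).sub hψ
  have hopt : 0 ≤ (inner ℝ (gh πt) d : ℝ) - (inner ℝ (gh q) d : ℝ) := by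
    refine deriv_nonneg_of_slope hF ?_
    intro t ht
    have hmin := hπt_min _ (hmapS (Set.mem_Icc.2 ⟨le_of_lt ht.1, ht.2⟩))
    have h0 : bregman h gh (πt + (0:ℝ) • d) q = bregman h gh πt q := by simp
    rw [h0]
    exact div_nonneg (by linarith) (le_of_lt ht.1)
  -- algebra
  have k1 : (inner ℝ (gh πt) (πb - πt) : ℝ) = - inner ℝ (gh πt) (πt - πb) := by
    rw [← neg_sub, inner_neg_right]
  have k2 : (inner ℝ (gh q) (πb - πt) : ℝ) = - inner ℝ (gh q) (πt - πb) := by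
    rw [← neg_sub, inner_neg_right]
  have e1 : (inner ℝ (η • f - gh πb) (πt - πb) : ℝ)
      = (inner ℝ (gh q) (πt - πb) : ℝ) - (inner ℝ (gh πb) (πt - πb) : ℝ) := by
    rw [← hq_dual, inner_sub_left]
  have esum : bregman h gh πt πb + bregman h gh πb πt
      = (inner ℝ (gh πt) (πt - πb) : ℝ) - (inner ℝ (gh πb) (πt - πb) : ℝ) := by
    simp only [bregman]
    rw [k1]; ring
  rw [hd, k1, k2] at hopt
  constructor
  · rw [e1, esum]; linarith
  · linarith
end

section
/- Let γ ∈ [0,1), ν ≥ 0, τ ≥ 0, let (Δ_t)_{t≥0} and (D_t)_{t≥0} be sequences of nonnegative real numbers, and let (η_t)_{t≥0} be a nondecreasing sequence of positive real numbers. Suppose that for every t ≥ 0, ν·(Δ_{t+1} − Δ_t) + Δ_t ≤ (D_t − D_{t+1}) / ((1−γ)·η_t) + (1+ν)·τ. Then for every integer T ≥ 1, (1/T)·∑_{t=0}^{T−1} Δ_t ≤ (1/T)·( D_0/((1−γ)·η_0) + ν·Δ_0 ) + (1+ν)·τ. -/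
/-- arithmetic core of the sublinear `O(1/T)` convergence of AMPO with
nondecreasing step sizes (Theorem 4.3, sublinear part). -/
theorem ampo_sublinear_recursion (γ ν τ : ℝ) (hγ0 : 0 ≤ γ) (hγ1 : γ < 1)
    (hν : 0 ≤ ν) (hτ : 0 ≤ τ)
    (Δ D : ℕ → ℝ) (hΔ : ∀ t, 0 ≤ Δ t) (hD : ∀ t, 0 ≤ D t)
    (η : ℕ → ℝ) (hη : ∀ t, 0 < η t) (hηmono : ∀ t, η t ≤ η (t + 1))
    (hrec : ∀ t, ν * (Δ (t + 1) - Δ t) + Δ t ≤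
      (D t - D (t + 1)) / ((1 - γ) * η t) + (1 + ν) * τ)
    (T : ℕ) (hT : 1 ≤ T) :
    (1 / (T : ℝ)) * ∑ t ∈ Finset.range T, Δ t ≤
      (1 / (T : ℝ)) * (D 0 / ((1 - γ) * η 0) + ν * Δ 0) + (1 + ν) * τ := by
  have hc : (0:ℝ) < 1 - γ := by linarith
  have hcη : ∀ t, (0:ℝ) < (1 - γ) * η t := fun t => mul_pos hc (hη t)
  have key : ∀ n : ℕ, ∑ t ∈ Finset.range n, Δ t + ν * Δ n + D n / ((1 - γ) * η n) ≤
      D 0 / ((1 - γ) * η 0) + ν * Δ 0 + n * ((1 + ν) * τ) := by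
    intro n
    induction n with
    | zero => simp; linarith
    | succ n ih =>
      have hrecn := hrec n
      have hmono : D (n+1) / ((1 - γ) * η (n+1)) ≤ D (n+1) / ((1 - γ) * η n) :=
        div_le_div_of_nonneg_left (hD _) (hcη n)
          (mul_le_mul_of_nonneg_left (hηmono n) hc.le)
      have hsum : ∑ t ∈ Finset.range (n+1), Δ t = ∑ t ∈ Finset.range n, Δ t + Δ n :=
        Finset.sum_range_succ _ _
      have hsub : D n / ((1 - γ) * η n) - D (n+1) / ((1 - γ) * η n)
          = (D n - D (n+1)) / ((1 - γ) * η n) := by ring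
      push_cast
      rw [hsum]
      nlinarith [hmono, hrecn, ih, hsub]
  have hkey := key T
  have hTpos : (0:ℝ) < T := by exact_mod_cast hT
  have hdrop : ∑ t ∈ Finset.range T, Δ t ≤
      D 0 / ((1 - γ) * η 0) + ν * Δ 0 + T * ((1 + ν) * τ) := by
    have h1 : 0 ≤ ν * Δ T := mul_nonneg hν (hΔ T)
    have h2 : 0 ≤ D T / ((1 - γ) * η T) := div_nonneg (hD T) (hcη T).le
    linarith
  rw [div_mul_eq_mul_div, div_mul_eq_mul_div, div_add' _ _ _ (ne_of_gt hTpos),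
    div_le_div_iff₀ hTpos hTpos]
  nlinarith [hdrop]
end

section
/- Let γ ∈ [0,1), ν > 1, τ ≥ 0, let (Δ_t)_{t≥0} and (D_t)_{t≥0} be sequences of nonnegative real numbers, and let (η_t)_{t≥0} be a sequence of positive real numbers satisfying the geometric growth condition η_{t+1}·(ν − 1) ≥ ν·η_t for all t ≥ 0. Suppose that for every t ≥ 0, ν·(Δ_{t+1} − Δ_t) + Δ_t ≤ (D_t − D_{t+1}) / ((1−γ)·η_t) + (1+ν)·τ. Then for every integer T ≥ 0, Δ_T ≤ (1 − 1/ν)^T · ( Δ_0 + D_0 / ((1−γ)·η_0·(ν − 1)) ) + (1+ν)·τ. -/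
/-- arithmetic core of the linear convergence of AMPO with geometrically
increasing step sizes (Theorem 4.3, linear part). -/
theorem ampo_linear_recursion (γ ν τ : ℝ) (hγ0 : 0 ≤ γ) (hγ1 : γ < 1)
    (hν : 1 < ν) (hτ : 0 ≤ τ)
    (Δ D : ℕ → ℝ) (hΔ : ∀ t, 0 ≤ Δ t) (hD : ∀ t, 0 ≤ D t)
    (η : ℕ → ℝ) (hη : ∀ t, 0 < η t)
    (hηgrow : ∀ t, ν * η t ≤ η (t + 1) * (ν - 1))
    (hrec : ∀ t, ν * (Δ (t + 1) - Δ t) + Δ t ≤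
      (D t - D (t + 1)) / ((1 - γ) * η t) + (1 + ν) * τ)
    (T : ℕ) :
    Δ T ≤ (1 - 1 / ν) ^ T * (Δ 0 + D 0 / ((1 - γ) * η 0 * (ν - 1))) + (1 + ν) * τ := by
  have h1γ : 0 < 1 - γ := by linarith
  have hν0 : 0 < ν := by linarith
  have hν1 : 0 < ν - 1 := by linarith
  set c : ℝ := 1 - 1 / ν with hc
  have hτ' : 0 ≤ (1 + ν) * τ := mul_nonneg (by linarith) hτ
  set G : ℕ → ℝ := fun t => Δ t + D t / ((1 - γ) * η t * (ν - 1)) with hG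
  have hGstep : ∀ t, ν * G (t + 1) ≤ (ν - 1) * G t + (1 + ν) * τ := by
    intro t
    have hA : 0 < (1 - γ) * η t := mul_pos h1γ (hη t)
    have hA' : 0 < (1 - γ) * η t * (ν - 1) := mul_pos hA hν1
    have hB : 0 < (1 - γ) * η (t + 1) * (ν - 1) := mul_pos (mul_pos h1γ (hη (t + 1))) hν1
    have h2 := hrec t
    rw [sub_div] at h2
    have aux : ν * (D (t + 1) / ((1 - γ) * η (t + 1) * (ν - 1))) ≤
        D (t + 1) / ((1 - γ) * η t) := by
      rw [mul_div_assoc', div_le_div_iff₀ hB hA]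
      have hgr := hηgrow t
      have := hD (t + 1)
      nlinarith [mul_le_mul_of_nonneg_left hgr (mul_nonneg (hD (t + 1)) h1γ.le)]
    have aux2 : (ν - 1) * (D t / ((1 - γ) * η t * (ν - 1))) = D t / ((1 - γ) * η t) := by
      field_simp
    have e1 : ν * G (t + 1) =
        ν * Δ (t + 1) + ν * (D (t + 1) / ((1 - γ) * η (t + 1) * (ν - 1))) := by
      simp only [hG]; ring
    have e2 : (ν - 1) * G t =
        (ν - 1) * Δ t + (ν - 1) * (D t / ((1 - γ) * η t * (ν - 1))) := by
      simp only [hG]; ring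
    rw [e1, e2, aux2]
    nlinarith [aux, h2]
  have main : ∀ T : ℕ, G T ≤ c ^ T * G 0 + (1 + ν) * τ := by
    intro T
    induction T with
    | zero => simp; linarith
    | succ t ih =>
      have h := hGstep t
      have h3 : (ν - 1) * G t ≤ (ν - 1) * (c ^ t * G 0 + (1 + ν) * τ) :=
        mul_le_mul_of_nonneg_left ih hν1.le
      have hνc : ν * c = ν - 1 := by rw [hc, mul_sub, mul_one, mul_one_div_cancel hν0.ne']
      have key : (ν - 1) * (c ^ t * G 0) = ν * (c ^ (t + 1) * G 0) := by
        rw [pow_succ, ← hνc]; ring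
      have h4 : ν * G (t + 1) ≤ ν * (c ^ (t + 1) * G 0) + ν * ((1 + ν) * τ) := by
        nlinarith [h, h3, key]
      have := (mul_le_mul_iff_right₀ hν0).mp (by linarith : ν * G (t + 1) ≤ ν * (c ^ (t + 1) * G 0 + (1 + ν) * τ))
      exact this
  have hDT : 0 ≤ D T / ((1 - γ) * η T * (ν - 1)) :=
    div_nonneg (hD T) (mul_nonneg (mul_nonneg h1γ.le (hη T).le) hν1.le)
  have := main T
  simp only [hG] at this
  linarith
end

section
/- Let A be a nonempty finite set, let ω < 0, and let φ : ℝ → ℝ be a continuous, strictly increasing function whose range is (ω, +∞), with (continuous, strictly increasing) inverse φ⁻¹ : (ω, +∞) → ℝ. Define h : Δ(A) → ℝ by h(p) = ∑_{a ∈ A} ∫_1^{p_a} φ⁻¹(t) dt (well defined since [0,1] ⊂ (ω, +∞)). Let x ∈ ℝ^A and π ∈ Δ(A). Then π minimizes p ↦ h(p) − ∑_{a ∈ A} x_a·p_a over Δ(A) if and only if there exists λ ∈ ℝ such that π_a = max(φ(x_a + λ), 0) for all a ∈ A (and ∑_{a ∈ A} π_a = 1). -/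
/-- characterization of the Bregman projection for ω-potential mirror maps
(Proposition 3.5, after Krichene et al.). For an increasing potential `φ` with range
`(ω, +∞)`, `ω < 0`, and mirror map `h(p) = ∑_a ∫_1^{p_a} φ⁻¹(t) dt`, a point `π` of the
simplex minimizes `p ↦ h(p) − ⟨x, p⟩` over the simplex iff `π_a = max(φ(x_a + λ), 0)`
for some normalization constant `λ`. -/
theorem omega_potential_bregman_projection {A : Type*} [Fintype A] [Nonempty A]
    (ω : ℝ) (hω : ω < 0) (φ ψ : ℝ → ℝ)
    (hφcont : Continuous φ) (hφmono : StrictMono φ)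
    (hφrange : Set.range φ = Set.Ioi ω)
    (hψcont : ContinuousOn ψ (Set.Ioi ω)) (hψmono : StrictMonoOn ψ (Set.Ioi ω))
    (hinv₁ : ∀ z : ℝ, ψ (φ z) = z)
    (hinv₂ : ∀ t ∈ Set.Ioi ω, φ (ψ t) = t)
    (x : A → ℝ) (π : A → ℝ) (hπ : π ∈ stdSimplex ℝ A) :
    (∀ p ∈ stdSimplex ℝ A,
        (∑ a, ∫ t in (1:ℝ)..(π a), ψ t) - ∑ a, x a * π a ≤
          (∑ a, ∫ t in (1:ℝ)..(p a), ψ t) - ∑ a, x a * p a) ↔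
      ∃ lam : ℝ, ∀ a, π a = max (φ (x a + lam)) 0 := by
  classical
  have hmemIoi : ∀ t : ℝ, 0 ≤ t → t ∈ Set.Ioi ω := fun t ht => Set.mem_Ioi.mpr (lt_of_lt_of_le hω ht)
  -- integrability of ψ on intervals with nonnegative endpoints
  have hsub : ∀ u v : ℝ, 0 ≤ u → 0 ≤ v → Set.uIcc u v ⊆ Set.Ioi ω := by
    intro u v hu hv t ht
    rw [Set.mem_uIcc] at ht
    rcases ht with ⟨h1, _⟩ | ⟨h1, _⟩
    · exact Set.mem_Ioi.mpr (lt_of_lt_of_le hω (hu.trans h1))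
    · exact Set.mem_Ioi.mpr (lt_of_lt_of_le hω (hv.trans h1))
  have hint : ∀ u v : ℝ, 0 ≤ u → 0 ≤ v →
      IntervalIntegrable ψ MeasureTheory.volume u v :=
    fun u v hu hv => (hψcont.mono (hsub u v hu hv)).intervalIntegrable
  -- the key per-coordinate strict inequality
  have key : ∀ c u v : ℝ, u = max (φ c) 0 → 0 ≤ v → v ≠ u →
      c * (v - u) < ∫ t in u..v, ψ t := by
    intro c u v hu hv hne
    have hu0 : 0 ≤ u := hu ▸ le_max_right _ _
    have hφmem : φ c ∈ Set.Ioi ω := hφrange ▸ Set.mem_range_self c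
    have hcu : c ≤ ψ u := by
      rcases le_or_gt (φ c) 0 with h | h
      · have hu' : u = 0 := by rw [hu, max_eq_right h]
        have h2 : ψ (φ c) ≤ ψ 0 := hψmono.monotoneOn hφmem (hmemIoi 0 le_rfl) h
        rw [hinv₁] at h2
        rw [hu']
        exact h2
      · have hu' : u = φ c := by rw [hu, max_eq_left h.le]
        rw [hu', hinv₁]
    rcases lt_or_gt_of_ne hne with hlt | hgt
    · -- v < u, so u > 0 and c = ψ u
      have hupos : 0 < u := lt_of_le_of_lt hv hlt
      have hc : ψ u ≤ c := by
        have hpos : 0 < φ c := by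
          by_contra h'
          push_neg at h'
          rw [hu, max_eq_right h'] at hupos
          exact lt_irrefl 0 hupos
        have hu' : u = φ c := by rw [hu, max_eq_left hpos.le]
        rw [hu', hinv₁]
      have hpos : 0 < ∫ t in v..u, (c - ψ t) := by
        apply intervalIntegral.intervalIntegral_pos_of_pos_on
        · exact intervalIntegrable_const.sub (hint v u hv hu0)
        · intro t ht
          have h1 : ψ t < ψ u := hψmono (hmemIoi t (le_trans hv ht.1.le)) (hmemIoi u hu0) ht.2
          linarith
        · exact hlt
      have heq : ∫ t in v..u, (c - ψ t) = c * (u - v) - ∫ t in v..u, ψ t := by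
        rw [intervalIntegral.integral_sub intervalIntegrable_const (hint v u hv hu0),
          intervalIntegral.integral_const, smul_eq_mul]
        ring
      rw [intervalIntegral.integral_symm v u]
      linarith
    · -- u < v
      have hpos : 0 < ∫ t in u..v, (ψ t - c) := by
        apply intervalIntegral.intervalIntegral_pos_of_pos_on
        · exact (hint u v hu0 hv).sub intervalIntegrable_const
        · intro t ht
          have h1 : ψ u < ψ t := hψmono (hmemIoi u hu0) (hmemIoi t (le_trans hu0 ht.1.le)) ht.1
          linarith
        · exact hgt
      have heq : ∫ t in u..v, (ψ t - c) = (∫ t in u..v, ψ t) - c * (v - u) := by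
        rw [intervalIntegral.integral_sub (hint u v hu0 hv) intervalIntegrable_const,
          intervalIntegral.integral_const, smul_eq_mul]
        ring
      linarith
  have keyle : ∀ c u v : ℝ, u = max (φ c) 0 → 0 ≤ v →
      c * (v - u) ≤ ∫ t in u..v, ψ t := by
    intro c u v hu hv
    rcases eq_or_ne v u with h | h
    · subst h; simp
    · exact (key c u v hu hv h).le
  -- linear algebra on sums
  have sumlin : ∀ (lam : ℝ) (u v : A → ℝ), (∑ a, u a) = 1 → (∑ a, v a) = 1 →
      ∑ a, (x a + lam) * (v a - u a) = (∑ a, x a * v a) - ∑ a, x a * u a := by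
    intro lam u v hu hv
    have h1 : ∀ a : A, (x a + lam) * (v a - u a) =
        (x a * v a - x a * u a) + (lam * v a - lam * u a) := fun a => by ring
    rw [Finset.sum_congr rfl fun a _ => h1 a, Finset.sum_add_distrib,
      Finset.sum_sub_distrib, Finset.sum_sub_distrib, ← Finset.mul_sum, ← Finset.mul_sum, hu, hv]
    ring
  -- any point of the given form is a minimizer
  have minimizer : ∀ (lam : ℝ) (q : A → ℝ), (∀ a, q a = max (φ (x a + lam)) 0) →
      (∑ a, q a) = 1 → ∀ p ∈ stdSimplex ℝ A,
      (∑ a, ∫ t in (1:ℝ)..(q a), ψ t) - ∑ a, x a * q a ≤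
        (∑ a, ∫ t in (1:ℝ)..(p a), ψ t) - ∑ a, x a * p a := by
    intro lam q hqdef hq1 p hp
    have hqnn : ∀ a, 0 ≤ q a := fun a => (hqdef a) ▸ le_max_right _ _
    have hstep : ∀ a, (x a + lam) * (p a - q a) ≤ ∫ t in (q a)..(p a), ψ t :=
      fun a => keyle _ _ _ (hqdef a) (hp.1 a)
    have hsplit : ∀ a, (∫ t in (1:ℝ)..(p a), ψ t) =
        (∫ t in (1:ℝ)..(q a), ψ t) + ∫ t in (q a)..(p a), ψ t := fun a =>
      (intervalIntegral.integral_add_adjacent_intervals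
        (hint 1 (q a) zero_le_one (hqnn a)) (hint (q a) (p a) (hqnn a) (hp.1 a))).symm
    have hS : ∑ a, (x a + lam) * (p a - q a) ≤ ∑ a, ∫ t in (q a)..(p a), ψ t :=
      Finset.sum_le_sum fun a _ => hstep a
    rw [Finset.sum_congr rfl fun a _ => hsplit a, Finset.sum_add_distrib]
    have hlin := sumlin lam q p hq1 hp.2
    linarith
  -- existence of a normalizing constant
  have hsum : ∃ lam : ℝ, ∑ a, max (φ (x a + lam)) 0 = 1 := by
    obtain ⟨z₀, hz₀⟩ : (ω / 2) ∈ Set.range φ := hφrange ▸ Set.mem_Ioi.mpr (by linarith)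
    obtain ⟨z₁, hz₁⟩ : (1 : ℝ) ∈ Set.range φ := hφrange ▸ Set.mem_Ioi.mpr (by linarith)
    have hne : (Finset.univ : Finset A).Nonempty := Finset.univ_nonempty
    set M := Finset.univ.sup' hne x with hM
    set m := Finset.univ.inf' hne x with hm
    set g : ℝ → ℝ := fun lam => ∑ a, max (φ (x a + lam)) 0 with hg
    have hgcont : Continuous g := by
      apply continuous_finset_sum
      intro a _
      exact (hφcont.comp (continuous_const.add continuous_id)).max continuous_const
    have hg1 : g (z₀ - M) = 0 := by
      apply Finset.sum_eq_zero
      intro a _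
      have hle : x a + (z₀ - M) ≤ z₀ := by
        have := Finset.le_sup' x (Finset.mem_univ a)
        rw [← hM] at this
        linarith
      have h2 : φ (x a + (z₀ - M)) ≤ ω / 2 := by
        have := hφmono.monotone hle
        rw [hz₀] at this
        exact this
      exact max_eq_right (by linarith)
    have hg2 : 1 ≤ g (z₁ - m) := by
      obtain ⟨a₀, _, ha₀⟩ := Finset.exists_mem_eq_inf' hne x
      have h1 : max (φ (x a₀ + (z₁ - m))) 0 = 1 := by
        have hx : x a₀ + (z₁ - m) = z₁ := by
          rw [hm, ha₀]; ring
        rw [hx, hz₁]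
        exact max_eq_left (by norm_num)
      calc (1 : ℝ) = max (φ (x a₀ + (z₁ - m))) 0 := h1.symm
        _ ≤ g (z₁ - m) :=
          Finset.single_le_sum (f := fun a => max (φ (x a + (z₁ - m))) 0)
            (fun a _ => le_max_right _ _) (Finset.mem_univ a₀)
    have hmem : (1 : ℝ) ∈ Set.uIcc (g (z₀ - M)) (g (z₁ - m)) := by
      rw [Set.mem_uIcc]
      left
      constructor <;> linarith
    obtain ⟨lam, _, hlam⟩ := intermediate_value_uIcc hgcont.continuousOn hmem
    exact ⟨lam, hlam⟩
  constructor
  · -- forward direction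
    intro hmin
    obtain ⟨lam, hlam⟩ := hsum
    set q : A → ℝ := fun a => max (φ (x a + lam)) 0 with hqdef
    have hq1 : ∑ a, q a = 1 := hlam
    have hqnn : ∀ a, 0 ≤ q a := fun a => le_max_right _ _
    have hqmem : q ∈ stdSimplex ℝ A := ⟨hqnn, hq1⟩
    have h1 := hmin q hqmem
    have h2 := minimizer lam q (fun a => rfl) hq1 π hπ
    have hsplit : ∀ a, (∫ t in (1:ℝ)..(π a), ψ t) =
        (∫ t in (1:ℝ)..(q a), ψ t) + ∫ t in (q a)..(π a), ψ t := fun a =>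
      (intervalIntegral.integral_add_adjacent_intervals
        (hint 1 (q a) zero_le_one (hqnn a)) (hint (q a) (π a) (hqnn a) (hπ.1 a))).symm
    have hdnn : ∀ a, 0 ≤ (∫ t in (q a)..(π a), ψ t) - (x a + lam) * (π a - q a) :=
      fun a => sub_nonneg.mpr (keyle _ _ _ rfl (hπ.1 a))
    have hdsum : ∑ a, ((∫ t in (q a)..(π a), ψ t) - (x a + lam) * (π a - q a)) = 0 := by
      rw [Finset.sum_sub_distrib, sumlin lam q π hq1 hπ.2]
      have e : ∑ a, (∫ t in (1:ℝ)..(π a), ψ t) =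
          ∑ a, ((∫ t in (1:ℝ)..(q a), ψ t) + ∫ t in (q a)..(π a), ψ t) :=
        Finset.sum_congr rfl fun a _ => hsplit a
      rw [Finset.sum_add_distrib] at e
      linarith
    have hzero := (Finset.sum_eq_zero_iff_of_nonneg (fun a _ => hdnn a)).mp hdsum
    refine ⟨lam, fun a => ?_⟩
    by_contra hne
    have hne' : π a ≠ q a := hne
    have hk := key (x a + lam) (q a) (π a) rfl (hπ.1 a) hne'
    have := hzero a (Finset.mem_univ a)
    linarith
  · -- backward direction
    rintro ⟨lam, hlam⟩
    exact minimizer lam π hlam hπ.2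
end
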